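/- arXiv:0707.3241 — 3 statements merged into one kernel-verified Lean document; each statement's English description precedes it below -/
import Mathlib

section
/- If every vertex in the exterior boundary ∂⁺U of a set U of vertices in a graph G is (c,α,ε)-good, then for every v ∈ U and every λ ≤ α², the block boundary weight satisfies ψ_λ(v) = ∑_{w ∈ ∂⁺U} λ^{d(w,v)} ≤ ε·λ/α². -/
/-- If every vertex of the exterior boundary `∂⁺U` is `(c,α,ε)`-good, then for
every `v ∈ U` and every `0 < λ ≤ α²`, the block boundary weight satisfies
`ψ_λ(v) = ∑_{w ∈ ∂⁺U} λ^{d(w,v)} ≤ ε·λ/α²`. -/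
theorem stmt_2 {V : Type*} [Fintype V] [DecidableEq V]
    (G : SimpleGraph V) [DecidableRel G.Adj] (hconn : G.Connected)
    (c : ℕ) (α ε lam : ℝ) (hα0 : 0 < α) (hα1 : α < 1)
    (hlam0 : 0 < lam) (hlam : lam ≤ α ^ 2)
    (U : Finset V) (hU : U.Nonempty)
    (hbd : (Finset.univ.filter fun u => u ∉ U ∧ ∃ u' ∈ U, G.Adj u' u).Nonempty)
    (hgood : ∀ w ∈ Finset.univ.filter fun u => u ∉ U ∧ ∃ u' ∈ U, G.Adj u' u,
      G.degree w ≤ c ∧ ∑ u ∈ Finset.univ.filter (· ≠ w), α ^ G.dist w u ≤ ε)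
    (v : V) (hv : v ∈ U) :
    ∑ w ∈ Finset.univ.filter fun u => u ∉ U ∧ ∃ u' ∈ U, G.Adj u' u,
      lam ^ G.dist w v ≤ ε * lam / α ^ 2 := by
  classical
  set B : Finset V := Finset.univ.filter fun u => u ∉ U ∧ ∃ u' ∈ U, G.Adj u' u with hB
  have hα2 : (0:ℝ) < α ^ 2 := by positivity
  -- pick a boundary vertex minimizing distance to v
  obtain ⟨w₀, hw₀B, hw₀min⟩ := Finset.exists_min_image B (fun w => G.dist w v) hbd
  have hvB : v ∉ B := by
    intro h
    simp only [hB, Finset.mem_filter] at h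
    exact h.2.1 hv
  have hne : ∀ w ∈ B, w ≠ v := fun w hw h => hvB (h ▸ hw)
  have hdpos : ∀ w ∈ B, 1 ≤ G.dist w v := fun w hw =>
    hconn.pos_dist_of_ne (hne w hw)
  -- Step 1 : λ^{d(w,v)} ≤ (λ/α²) * (α²)^{d(w,v)}
  have step1 : ∀ w ∈ B, lam ^ G.dist w v ≤ lam / α ^ 2 * (α ^ 2) ^ G.dist w v := by
    intro w hw
    obtain ⟨k, hk⟩ := Nat.exists_eq_add_of_le (hdpos w hw)
    rw [hk, pow_add, pow_add, pow_one, pow_one]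
    have : lam ^ k ≤ (α ^ 2) ^ k := pow_le_pow_left₀ hlam0.le hlam k
    calc lam * lam ^ k ≤ lam * (α ^ 2) ^ k := by
          apply mul_le_mul_of_nonneg_left this (by positivity)
      _ = lam / α ^ 2 * (α ^ 2 * (α ^ 2) ^ k) := by
          field_simp
  -- Step 2 : ∑_{w∈B} (α²)^{d(w,v)} ≤ ε
  have step2 : ∑ w ∈ B, (α ^ 2) ^ G.dist w v ≤ ε := by
    have hε := (hgood w₀ hw₀B).2
    refine le_trans ?_ hε
    -- reindex: send w₀ ↦ v, w ↦ w for w ≠ w₀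
    have key : ∀ w ∈ B, (α ^ 2) ^ G.dist w v ≤
        α ^ G.dist w₀ (if w = w₀ then v else w) := by
      intro w hw
      by_cases h : w = w₀
      · subst h
        simp only [eq_self_iff_true, if_true]
        rw [← pow_mul]
        apply pow_le_pow_of_le_one hα0.le hα1.le
        omega
      · simp only [if_neg h]
        rw [← pow_mul]
        apply pow_le_pow_of_le_one hα0.le hα1.le
        have htri : G.dist w₀ w ≤ G.dist w₀ v + G.dist v w := hconn.dist_triangle
        have h1 : G.dist w₀ v ≤ G.dist w v := hw₀min w hw
        have h2 : G.dist v w = G.dist w v := SimpleGraph.dist_comm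
        omega
    calc ∑ w ∈ B, (α ^ 2) ^ G.dist w v
        ≤ ∑ w ∈ B, α ^ G.dist w₀ (if w = w₀ then v else w) :=
          Finset.sum_le_sum key
      _ = ∑ u ∈ B.image (fun w => if w = w₀ then v else w), α ^ G.dist w₀ u := by
          rw [Finset.sum_image]
          intro x hx y hy hxy
          by_cases h1 : x = w₀ <;> by_cases h2 : y = w₀
          · exact h1.trans h2.symm
          · simp only [if_pos h1, if_neg h2] at hxy
            exact absurd hxy.symm (hne y hy)
          · simp only [if_neg h1, if_pos h2] at hxy
            exact absurd hxy (hne x hx)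
          · simpa only [if_neg h1, if_neg h2] using hxy
      _ ≤ ∑ u ∈ Finset.univ.filter (· ≠ w₀), α ^ G.dist w₀ u := by
          apply Finset.sum_le_sum_of_subset_of_nonneg
          · intro u hu
            simp only [Finset.mem_image] at hu
            obtain ⟨w, hw, rfl⟩ := hu
            simp only [Finset.mem_filter, Finset.mem_univ, true_and]
            by_cases h : w = w₀
            · simp only [if_pos h]
              exact fun hvw => hvB (hvw ▸ hw₀B)
            · simpa [if_neg h] using h
          · intro _ _ _; positivity
  calc ∑ w ∈ B, lam ^ G.dist w v
      ≤ ∑ w ∈ B, lam / α ^ 2 * (α ^ 2) ^ G.dist w v := Finset.sum_le_sum step1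
    _ = lam / α ^ 2 * ∑ w ∈ B, (α ^ 2) ^ G.dist w v := by rw [Finset.mul_sum]
    _ ≤ lam / α ^ 2 * ε := by
        apply mul_le_mul_of_nonneg_left step2 (by positivity)
    _ = ε * lam / α ^ 2 := by ring
end

section
/- Let Γ be a self-avoiding path in a connected graph B such that the tree excess of B (number of edges minus number of vertices plus one) is at most 1. Then for every vertex v of B and every D ≥ 1, the number of vertices u ∈ Γ with d(v,u) = D is at most 4. -/
private lemma seq_defect_mid (f : ℕ → ℕ) (k D : ℕ)
    (hadj : ∀ i, i < k → f (i+1) = f i + 1 ∨ f i = f (i+1) + 1 ∨ f (i+1) = f i)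
    (a b c : ℕ) (hab : a < b) (hbc : b < c) (hck : c ≤ k)
    (hfa : f a = D) (hfb : f b = D) (hfc : f c = D) :
    ∃ j, a ≤ j ∧ j < c ∧
      (f (j+1) = f j ∨ (0 < j ∧ f j = f (j-1) + 1 ∧ f j = f (j+1) + 1)) := by
  classical
  by_cases hflat : ∃ j, a ≤ j ∧ j < c ∧ f (j+1) = f j
  · obtain ⟨j, h1, h2, h3⟩ := hflat; exact ⟨j, h1, h2, Or.inl h3⟩
  push_neg at hflat
  have hpm : ∀ j, a ≤ j → j < c → f (j+1) = f j + 1 ∨ f j = f (j+1) + 1 := by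
    intro j hj hj'
    rcases hadj j (lt_of_lt_of_le hj' hck) with h | h | h
    · exact Or.inl h
    · exact Or.inr h
    · exact absurd h (hflat j hj hj')
  rcases hpm b (le_of_lt hab) hbc with hup | hdown
  · -- ascent out of b : find least descent in [b+1, c)
    have hex : ∃ j, b + 1 ≤ j ∧ j < c ∧ f j = f (j+1) + 1 := by
      by_contra hno
      push_neg at hno
      have hmono : ∀ m, b + 1 ≤ m → m ≤ c → D < f m := by
        intro m hm
        induction m, hm using Nat.le_induction with
        | base => intro _; omega
        | succ m hm ih =>
          intro hmc
          have h1 : D < f m := ih (by omega)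
          rcases hpm m (by omega) (by omega) with h | h
          · omega
          · exact absurd h (hno m (by omega) (by omega))
      have := hmono c (by omega) le_rfl
      omega
    have hspec := Nat.find_spec hex
    set j0 := Nat.find hex with hj0def
    obtain ⟨hj0b, hj0c, hj0d⟩ := hspec
    have hprev : f j0 = f (j0 - 1) + 1 := by
      rcases eq_or_lt_of_le hj0b with heq | hlt
      · have h1 : j0 - 1 = b := by omega
        have h2 : j0 = b + 1 := heq.symm
        rw [h1, h2]; exact hup
      · have h3 := Nat.find_min hex (show j0 - 1 < j0 by omega)
        have h5 : j0 - 1 + 1 = j0 := by omega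
        rcases hpm (j0-1) (by omega) (by omega) with h | h
        · rw [h5] at h; exact h
        · exact absurd ⟨by omega, by omega, h⟩ h3
    exact ⟨j0, by omega, hj0c, Or.inr ⟨by omega, hprev, hj0d⟩⟩
  · -- descent out of b
    rcases hpm (b-1) (by omega) (by omega) with hup2 | hdown2
    · -- ascent into b : peak at b
      have h5 : b - 1 + 1 = b := by omega
      rw [h5] at hup2
      exact ⟨b, by omega, by omega, Or.inr ⟨by omega, hup2, hdown⟩⟩
    · -- descent into b from above : find greatest ascent in [a, b-1)
      have h5 : b - 1 + 1 = b := by omega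
      rw [h5] at hdown2
      have hex2 : ∃ j, a ≤ j ∧ j + 1 < b ∧ f (j+1) = f j + 1 := by
        by_contra hno; push_neg at hno
        have hmono : ∀ m, a ≤ m → m ≤ b - 1 → f m ≤ D := by
          intro m hm
          induction m, hm using Nat.le_induction with
          | base => intro _; omega
          | succ m hm ih =>
            intro hmb
            have h1 : f m ≤ D := ih (by omega)
            rcases hpm m (by omega) (by omega) with h | h
            · exact absurd h (hno m (by omega) (by omega))
            · omega
        have := hmono (b-1) (by omega) le_rfl
        omega
      obtain ⟨jw, hjw⟩ := hex2
      have hQ := Nat.findGreatest_spec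
        (P := fun j => a ≤ j ∧ j + 1 < b ∧ f (j+1) = f j + 1) (n := b-1) (m := jw)
        (by omega) hjw
      set j0 := Nat.findGreatest (fun j => a ≤ j ∧ j + 1 < b ∧ f (j+1) = f j + 1) (b-1) with hj0def
      obtain ⟨hQ1, hQ2, hQ3⟩ := hQ
      have hpk2 : f (j0+1) = f (j0+2) + 1 := by
        rcases eq_or_lt_of_le (show j0 + 1 ≤ b - 1 by omega) with heq | hlt
        · have e1 : f (j0+1) = f (b-1) := by rw [heq]
          have e2 : f (j0+2) = f b := by
            have : j0 + 2 = b := by omega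
            rw [this]
          omega
        · have h6 : ¬ (a ≤ j0 + 1 ∧ j0 + 1 + 1 < b ∧ f (j0+1+1) = f (j0+1) + 1) := by
            exact Nat.findGreatest_is_greatest (show j0 < j0 + 1 by omega)
              (show j0 + 1 ≤ b - 1 by omega)
          rcases hpm (j0+1) (by omega) (by omega) with h | h
          · exact absurd ⟨by omega, by omega, h⟩ h6
          · exact h
      refine ⟨j0 + 1, by omega, by omega, Or.inr ⟨by omega, ?_, hpk2⟩⟩
      have : j0 + 1 - 1 = j0 := by omega
      rw [this]; exact hQ3

private lemma seq_two_defects (f : ℕ → ℕ) (k D : ℕ)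
    (hadj : ∀ i, i < k → f (i+1) = f i + 1 ∨ f i = f (i+1) + 1 ∨ f (i+1) = f i)
    (i1 i2 i3 i4 i5 : ℕ) (h12 : i1 < i2) (h23 : i2 < i3) (h34 : i3 < i4) (h45 : i4 < i5)
    (h5k : i5 ≤ k) (hf1 : f i1 = D) (hf2 : f i2 = D) (hf3 : f i3 = D)
    (hf4 : f i4 = D) (hf5 : f i5 = D) :
    ∃ j1 j2, j1 < j2 ∧ j2 < k ∧
      (f (j1+1) = f j1 ∨ (0 < j1 ∧ f j1 = f (j1-1) + 1 ∧ f j1 = f (j1+1) + 1)) ∧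
      (f (j2+1) = f j2 ∨ (0 < j2 ∧ f j2 = f (j2-1) + 1 ∧ f j2 = f (j2+1) + 1)) := by
  obtain ⟨j1, hj1a, hj1c, hd1⟩ := seq_defect_mid f k D hadj i1 i2 i3 h12 h23 (by omega) hf1 hf2 hf3
  obtain ⟨j2, hj2a, hj2c, hd2⟩ := seq_defect_mid f k D hadj i3 i4 i5 h34 h45 h5k hf3 hf4 hf5
  exact ⟨j1, j2, by omega, by omega, hd1, hd2⟩


private lemma sym2_top {V : Type*} (L : V → ℕ) {x y x' y' : V}
    (h : L y + 1 = L x) (h' : L y' + 1 = L x') (he : s(x, y) = s(x', y')) : x = x' := by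
  rw [Sym2.eq_iff] at he
  rcases he with ⟨h1, h2⟩ | ⟨h1, h2⟩
  · exact h1
  · subst h1; subst h2; omega

private lemma sym2_flat_ne {V : Type*} (L : V → ℕ) {x y x' y' : V}
    (h : L x = L y) (h' : L y' + 1 = L x') : s(x, y) ≠ s(x', y') := by
  intro he
  rw [Sym2.eq_iff] at he
  rcases he with ⟨h1, h2⟩ | ⟨h1, h2⟩ <;> (subst h1; subst h2; omega)

private lemma exists_parent {V : Type*} {B : SimpleGraph V} (hconn : B.Connected)
    (v u : V) (hu : u ≠ v) :
    ∃ w, B.Adj u w ∧ B.dist v w + 1 = B.dist v u := by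
  obtain ⟨q, hq⟩ := hconn.exists_walk_length_eq_dist v u
  obtain ⟨x, hadj, r, hr⟩ := SimpleGraph.Walk.exists_eq_cons_of_ne hu q.reverse
  have hlen : q.reverse.length = B.dist v u := by
    rw [SimpleGraph.Walk.length_reverse, hq]
  have hrlen : r.length = B.dist v u - 1 := by
    rw [hr] at hlen; simp at hlen; omega
  have hd : 0 < B.dist v u := hconn.pos_dist_of_ne (Ne.symm hu)
  have h1 : B.dist v x ≤ B.dist v u - 1 := by
    have := SimpleGraph.dist_le r.reverse
    rwa [SimpleGraph.Walk.length_reverse, hrlen] at this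
  have h2 : B.dist v u ≤ B.dist v x + 1 := by
    have ht := hconn.dist_triangle (u := v) (v := x) (w := u)
    have hxu : B.dist x u ≤ 1 := by
      have := SimpleGraph.dist_le (SimpleGraph.Walk.cons hadj.symm SimpleGraph.Walk.nil)
      simpa using this
    omega
  exact ⟨x, hadj, by omega⟩

private lemma count_contra {V : Type*} [Fintype V] [DecidableEq V]
    (B : SimpleGraph V) [DecidableRel B.Adj]
    (hexcess : B.edgeFinset.card ≤ Fintype.card V) (v : V) (pa : V → V)
    (hpa : ∀ u, u ≠ v → B.Adj u (pa u) ∧ B.dist v (pa u) + 1 = B.dist v u)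
    (x1 x2 : Sym2 V) (hx1 : x1 ∈ B.edgeFinset) (hx2 : x2 ∈ B.edgeFinset) (hne : x1 ≠ x2)
    (h1 : ∀ u, u ≠ v → x1 ≠ s(u, pa u)) (h2 : ∀ u, u ≠ v → x2 ≠ s(u, pa u)) : False := by
  classical
  set img := (Finset.univ.erase v).image (fun u => s(u, pa u)) with himg
  have himg_sub : img ⊆ B.edgeFinset := by
    intro e he
    rw [himg, Finset.mem_image] at he
    obtain ⟨u, hu, rfl⟩ := he
    rw [SimpleGraph.mem_edgeFinset, SimpleGraph.mem_edgeSet]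
    exact (hpa u (Finset.ne_of_mem_erase hu)).1
  have himg_card : img.card = Fintype.card V - 1 := by
    rw [himg, Finset.card_image_of_injOn, Finset.card_erase_of_mem (Finset.mem_univ v),
      Finset.card_univ]
    intro u hu u' hu' he
    exact sym2_top (B.dist v) (hpa u (Finset.ne_of_mem_erase hu)).2
      (hpa u' (Finset.ne_of_mem_erase hu')).2 he
  have hx2img : x2 ∉ img := by
    rw [himg, Finset.mem_image]
    rintro ⟨u, hu, rfl⟩
    exact h2 u (Finset.ne_of_mem_erase hu) rfl
  have hx1ins : x1 ∉ insert x2 img := by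
    rw [Finset.mem_insert]
    rintro (rfl | hx)
    · exact hne rfl
    · rw [himg, Finset.mem_image] at hx
      obtain ⟨u, hu, rfl⟩ := hx
      exact h1 u (Finset.ne_of_mem_erase hu) rfl
  have hT_sub : insert x1 (insert x2 img) ⊆ B.edgeFinset := by
    intro e he
    rw [Finset.mem_insert, Finset.mem_insert] at he
    rcases he with rfl | rfl | he
    · exact hx1
    · exact hx2
    · exact himg_sub he
  have hT_card : (insert x1 (insert x2 img)).card = Fintype.card V + 1 := by
    rw [Finset.card_insert_of_notMem hx1ins, Finset.card_insert_of_notMem hx2img, himg_card]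
    have : 0 < Fintype.card V := Fintype.card_pos_iff.mpr ⟨v⟩
    omega
  have := Finset.card_le_card hT_sub
  omega


/-- In a connected graph with tree excess at most 1 (i.e. `|E| ≤ |V|`), any
self-avoiding path `Γ` has at most 4 vertices at distance exactly `D` from any
vertex `v`. -/
theorem stmt_5 {V : Type*} [Fintype V] [DecidableEq V]
    (B : SimpleGraph V) [DecidableRel B.Adj] (hconn : B.Connected)
    (hexcess : B.edgeFinset.card ≤ Fintype.card V)
    {a b : V} (p : B.Walk a b) (hp : p.IsPath) (v : V) (D : ℕ) (hD : 1 ≤ D) :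
    (p.support.toFinset.filter fun u => B.dist v u = D).card ≤ 4 := by
  classical
  by_contra hcon
  push_neg at hcon
  set L := p.support with hLdef
  set k := p.length with hkdef
  have hlen : L.length = k + 1 := p.length_support
  have hnodup : L.Nodup := hp.support_nodup
  set F : ℕ → V := fun i => L.getD i v with hFdef
  -- basic facts about F
  have hFadj : ∀ i, i < k → B.Adj (F i) (F (i+1)) := by
    intro i hi
    have h1 : i < L.length := by omega
    have h2 : i + 1 < L.length := by omega
    have h3 := List.isChain_iff_getElem.mp p.isChain_adj_support i (by rw [← hLdef]; omega)
    simp only [hFdef]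
    rw [List.getD_eq_getElem _ _ h1, List.getD_eq_getElem _ _ h2]
    exact h3
  have hFinj : ∀ i i', i ≤ k → i' ≤ k → F i = F i' → i = i' := by
    intro i i' hi hi' he
    have h1 : i < L.length := by omega
    have h2 : i' < L.length := by omega
    simp only [hFdef] at he
    rw [List.getD_eq_getElem _ _ h1, List.getD_eq_getElem _ _ h2] at he
    exact (hnodup.getElem_inj_iff).mp he
  -- distance step function
  have htri : ∀ x y : V, B.Adj x y → B.dist v y ≤ B.dist v x + 1 := by
    intro x y hxy
    have ht := hconn.dist_triangle (u := v) (v := x) (w := y)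
    have h1 : B.dist x y ≤ 1 := by
      have := SimpleGraph.dist_le (SimpleGraph.Walk.cons hxy SimpleGraph.Walk.nil)
      simpa using this
    omega
  have hstep : ∀ i, i < k →
      (B.dist v (F (i+1)) = B.dist v (F i) + 1 ∨
       B.dist v (F i) = B.dist v (F (i+1)) + 1 ∨
       B.dist v (F (i+1)) = B.dist v (F i)) := by
    intro i hi
    have h1 := htri _ _ (hFadj i hi)
    have h2 := htri _ _ (hFadj i hi).symm
    omega
  -- from vertex count to index count
  have hidx : 5 ≤ ((Finset.range (k+1)).filter (fun i => B.dist v (F i) = D)).card := by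
    have hle : (L.toFinset.filter fun u => B.dist v u = D).card ≤
        ((Finset.range (k+1)).filter (fun i => B.dist v (F i) = D)).card := by
      apply Finset.card_le_card_of_injOn (fun u => L.idxOf u)
      · intro u hu
        simp only [Finset.mem_coe] at hu ⊢
        rw [Finset.mem_filter] at hu
        obtain ⟨hu1, hu2⟩ := hu
        rw [List.mem_toFinset] at hu1
        have hlt : L.idxOf u < L.length := List.idxOf_lt_length_iff.mpr hu1
        have hFu : F (L.idxOf u) = u := by
          simp only [hFdef]
          rw [List.getD_eq_getElem _ _ hlt]
          exact List.getElem_idxOf hlt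
        rw [Finset.mem_filter, Finset.mem_range, hFu]
        exact ⟨by omega, hu2⟩
      · intro u hu u' hu' he
        simp only [Finset.coe_filter, Set.mem_setOf_eq, List.mem_toFinset] at hu hu'
        have h1 : L.idxOf u < L.length := List.idxOf_lt_length_iff.mpr hu.1
        have h2 : L.idxOf u' < L.length := List.idxOf_lt_length_iff.mpr hu'.1
        have e1 : L[L.idxOf u] = u := List.getElem_idxOf h1
        have e2 : L[L.idxOf u'] = u' := List.getElem_idxOf h2
        rw [← e1, ← e2]
        congr 1
    omega
  -- pick five indices
  obtain ⟨s5, hs5sub, hs5card⟩ := Finset.exists_subset_card_eq hidx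
  set e := s5.orderIsoOfFin hs5card with hedef
  have hmono : ∀ m m' : Fin 5, m < m' → ((e m : ℕ)) < ((e m' : ℕ)) :=
    fun m m' h => Subtype.coe_lt_coe.mpr (e.lt_iff_lt.mpr h)
  have hmem : ∀ m : Fin 5, ((e m : ℕ)) ≤ k ∧ B.dist v (F (e m : ℕ)) = D := by
    intro m
    have h1 := hs5sub (e m).2
    rw [Finset.mem_filter, Finset.mem_range] at h1
    exact ⟨by omega, h1.2⟩
  -- two defects
  obtain ⟨j1, j2, hj12, hj2k, hd1, hd2⟩ :=
    seq_two_defects (fun i => B.dist v (F i)) k D hstep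
      (e 0 : ℕ) (e 1 : ℕ) (e 2 : ℕ) (e 3 : ℕ) (e 4 : ℕ)
      (hmono 0 1 (by decide)) (hmono 1 2 (by decide)) (hmono 2 3 (by decide))
      (hmono 3 4 (by decide)) (hmem 4).1
      (hmem 0).2 (hmem 1).2 (hmem 2).2 (hmem 3).2 (hmem 4).2
  -- parent function
  have hpar : ∀ u : V, ∃ w : V, u ≠ v → B.Adj u w ∧ B.dist v w + 1 = B.dist v u := by
    intro u
    by_cases hu : u = v
    · exact ⟨v, fun h => absurd hu h⟩
    · obtain ⟨w, hw1, hw2⟩ := exists_parent hconn v u hu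
      exact ⟨w, fun _ => ⟨hw1, hw2⟩⟩
  choose pa hpa using hpar
  -- from a defect, produce an extra edge
  have mk_edge : ∀ j, j < k →
      (B.dist v (F (j+1)) = B.dist v (F j) ∨
        (0 < j ∧ B.dist v (F j) = B.dist v (F (j-1)) + 1 ∧
          B.dist v (F j) = B.dist v (F (j+1)) + 1)) →
      ∃ x : Sym2 V, x ∈ B.edgeFinset ∧ (∀ u, u ≠ v → x ≠ s(u, pa u)) ∧
        ((x = s(F j, F (j+1)) ∧ B.dist v (F (j+1)) = B.dist v (F j)) ∨
         (∃ c, x = s(F j, c) ∧ B.dist v c + 1 = B.dist v (F j))) := by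
    intro j hj hd
    rcases hd with hflat | ⟨hj0, hpk1, hpk2⟩
    · refine ⟨s(F j, F (j+1)), ?_, ?_, Or.inl ⟨rfl, hflat⟩⟩
      · rw [SimpleGraph.mem_edgeFinset, SimpleGraph.mem_edgeSet]
        exact hFadj j hj
      · intro u hu
        exact sym2_flat_ne (B.dist v) hflat.symm (hpa u hu).2
    · have hx0 : F j ≠ v := by
        intro h
        rw [h, SimpleGraph.dist_self] at hpk1
        omega
      have ejj : j - 1 + 1 = j := by omega
      have hadj1 : B.Adj (F (j-1)) (F j) := by
        have h := hFadj (j-1) (by omega)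
        rwa [ejj] at h
      have hadj2 : B.Adj (F j) (F (j+1)) := hFadj j hj
      have hne12 : F (j-1) ≠ F (j+1) := by
        intro h
        have := hFinj (j-1) (j+1) (by omega) (by omega) h
        omega
      obtain ⟨c, hcadj, hclvl, hcne⟩ :
          ∃ c, B.Adj (F j) c ∧ B.dist v c + 1 = B.dist v (F j) ∧ c ≠ pa (F j) := by
        by_cases hcc : pa (F j) = F (j-1)
        · exact ⟨F (j+1), hadj2, hpk2.symm, by rw [hcc]; exact hne12.symm⟩
        · exact ⟨F (j-1), hadj1.symm, hpk1.symm, fun h => hcc h.symm⟩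
      refine ⟨s(F j, c), ?_, ?_, Or.inr ⟨c, rfl, hclvl⟩⟩
      · rw [SimpleGraph.mem_edgeFinset, SimpleGraph.mem_edgeSet]
        exact hcadj
      · intro u hu heq
        have htop : F j = u := sym2_top (B.dist v) hclvl (hpa u hu).2 heq
        have hcpa : c = pa u := by
          rw [Sym2.eq_iff] at heq
          rcases heq with ⟨e1, e2⟩ | ⟨e1, e2⟩
          · exact e2
          · exfalso
            rw [e2, htop] at hclvl
            omega
        exact hcne (by rw [hcpa, htop])
  -- build the two extra edges and conclude
  obtain ⟨x1, hx1mem, hx1np, hx1tag⟩ := mk_edge j1 (by omega) hd1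
  obtain ⟨x2, hx2mem, hx2np, hx2tag⟩ := mk_edge j2 hj2k hd2
  have hx12 : x1 ≠ x2 := by
    rcases hx1tag with ⟨e1, lv1⟩ | ⟨c1, e1, lv1⟩ <;>
      rcases hx2tag with ⟨e2, lv2⟩ | ⟨c2, e2, lv2⟩
    · rw [e1, e2]
      intro h
      rw [Sym2.eq_iff] at h
      rcases h with ⟨g1, g2⟩ | ⟨g1, g2⟩
      · have := hFinj j1 j2 (by omega) (by omega) g1
        omega
      · have := hFinj j1 (j2+1) (by omega) (by omega) g1
        have := hFinj (j1+1) j2 (by omega) (by omega) g2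
        omega
    · rw [e1, e2]
      exact sym2_flat_ne (B.dist v) lv1.symm lv2
    · rw [e1, e2]
      exact (sym2_flat_ne (B.dist v) lv2.symm lv1).symm
    · rw [e1, e2]
      intro h
      have := sym2_top (B.dist v) lv1 lv2 h
      have := hFinj j1 j2 (by omega) (by omega) this
      omega
  exact count_contra B hexcess v pa hpa x1 x2 hx1mem hx2mem hx12 hx1np hx2np
end

section
/- First moment bound for expansion in G(n,d/n): for every d ≥ 1 there exists h < ∞ and a > 0 such that with probability 1−o(1), every connected subset S of the Erdős–Rényi random graph G(n,d/n) with |S| ≥ a log n has at most (h−1)|S| vertices at distance exactly 1 from S. In particular the expected number of violating sets, bounded by ∑_{s=a log n}^{n} n·d^{s−1}·P[Bin(sn, d/n) > (h−1)s], tends to 0 provided h−1 > d(e−1)+1. -/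
open MeasureTheory Filter
open scoped ENNReal

section Aux

lemma measure_cyl {ι : Type*} [Fintype ι] [DecidableEq ι] (q : NNReal) (hq : q ≤ 1) (E : Finset ι) :
    Measure.pi (fun _ : ι => (PMF.bernoulli q hq).toMeasure)
      {ω : ι → Bool | ∀ i ∈ E, ω i = true} = (q : ℝ≥0∞) ^ E.card := by
  have : {ω : ι → Bool | ∀ i ∈ E, ω i = true}
      = Set.pi Set.univ (fun i => if i ∈ E then ({true} : Set Bool) else Set.univ) := by
    ext ω
    simp only [Set.mem_setOf_eq, Set.mem_pi, Set.mem_univ, forall_true_left]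
    constructor
    · intro h i
      by_cases hi : i ∈ E <;> simp [hi, h i]
    · intro h i hi
      have := h i
      simpa [hi] using this
  rw [this, MeasureTheory.Measure.pi_pi]
  have : ∀ i : ι, (PMF.bernoulli q hq).toMeasure (if i ∈ E then ({true} : Set Bool) else Set.univ)
      = if i ∈ E then (q : ℝ≥0∞) else 1 := by
    intro i
    by_cases hi : i ∈ E
    · simp [hi, PMF.toMeasure_apply_singleton _ _ (measurableSet_singleton _), PMF.bernoulli_apply]
    · simp [hi, PMF.bernoulli_apply, add_tsub_cancel_of_le (ENNReal.coe_le_one_iff.2 hq)]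
  simp_rw [this]
  rw [Finset.prod_ite_mem, Finset.univ_inter, Finset.prod_const]

lemma exists_parent_s19 {V : Type*} [Fintype V] [DecidableEq V] (G : SimpleGraph V) (S : Finset V)
    (r : V) (hr : r ∈ S) (hconn : (G.induce (S : Set V)).Connected) :
    ∃ f : V → V, (∀ v ∈ S.erase r, f v ∈ S ∧ G.Adj v (f v)) ∧
      (∀ v, v ∉ S.erase r → f v = r) ∧
      Set.InjOn (fun v => s(v, f v)) (S.erase r : Set V) := by
  classical
  set H := G.induce (S : Set V) with hH
  set r' : (S : Set V) := ⟨r, hr⟩ with hr'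
  have key : ∀ v' : (S : Set V), v' ≠ r' → ∃ u' : (S : Set V),
      H.Adj v' u' ∧ H.dist r' u' + 1 = H.dist r' v' := by
    intro v' hv
    obtain ⟨p, hp⟩ := hconn.exists_walk_length_eq_dist r' v'
    obtain ⟨x, hadj, q, hq⟩ := SimpleGraph.Walk.exists_eq_cons_of_ne hv p.reverse
    refine ⟨x, hadj, ?_⟩
    have hd1 : H.dist r' x ≤ H.dist r' v' - 1 := by
      have hlen : p.reverse.length = H.dist r' v' := by
        rw [SimpleGraph.Walk.length_reverse, hp]
      rw [hq] at hlen
      simp only [SimpleGraph.Walk.length_cons] at hlen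
      have : H.dist r' x ≤ q.reverse.length := SimpleGraph.dist_le _
      simp only [SimpleGraph.Walk.length_reverse] at this
      omega
    have hd2 : H.dist r' v' ≤ H.dist r' x + 1 := by
      have htri := hconn.dist_triangle (u := r') (v := x) (w := v')
      have hxv : H.dist x v' ≤ 1 := by
        have : H.dist x v' ≤ (SimpleGraph.Walk.cons hadj.symm SimpleGraph.Walk.nil).length :=
          SimpleGraph.dist_le _
        simpa using this
      omega
    have hpos : 1 ≤ H.dist r' v' := by
      have : H.dist r' v' ≠ 0 := fun h => hv ((hconn.dist_eq_zero_iff).1 h).symm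
      omega
    omega
  have memS : ∀ {v}, v ∈ S.erase r → v ∈ (S : Set V) :=
    fun hv => Finset.mem_coe.2 (Finset.mem_of_mem_erase hv)
  have neR : ∀ {v} (hv : v ∈ S.erase r), (⟨v, memS hv⟩ : (S : Set V)) ≠ r' :=
    fun hv h => Finset.ne_of_mem_erase hv (congrArg Subtype.val h)
  set F : V → V := fun v => if hv : v ∈ S.erase r then
      ((key ⟨v, memS hv⟩ (neR hv)).choose : V) else r with hF
  set D : V → ℕ := fun v => if hv : v ∈ (S : Set V) then H.dist r' ⟨v, hv⟩ else 0 with hD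
  have hFS : ∀ v (hv : v ∈ S.erase r), F v ∈ S ∧ G.Adj v (F v) ∧ D (F v) + 1 = D v := by
    intro v hv
    obtain ⟨hadj, hdist⟩ := (key ⟨v, memS hv⟩ (neR hv)).choose_spec
    set u' := (key ⟨v, memS hv⟩ (neR hv)).choose with hu'
    have hFv : F v = (u' : V) := by rw [hF]; simp [hv]; rfl
    have hu'S : (u' : V) ∈ (S : Set V) := u'.2
    refine ⟨hFv ▸ Finset.mem_coe.1 hu'S, ?_, ?_⟩
    · rw [hFv]; exact hadj
    · rw [hFv, hD]
      simp only [hu'S, memS hv, dif_pos]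
      convert hdist using 3 <;> exact Subtype.ext rfl
  refine ⟨F, fun v hv => ⟨(hFS v hv).1, (hFS v hv).2.1⟩, fun v hv => by rw [hF]; simp [hv], ?_⟩
  intro v₁ h₁ v₂ h₂ heq
  simp only [Sym2.eq, Sym2.rel_iff', Prod.mk.injEq, Prod.swap_prod_mk] at heq
  rcases heq with ⟨h, -⟩ | ⟨ha, hb⟩
  · exact h
  · exfalso
    have e₁ := (hFS v₁ h₁).2.2
    have e₂ := (hFS v₂ h₂).2.2
    rw [hb] at e₁
    rw [← ha] at e₂
    omega

lemma pow_div_factorial_le_exp {x : ℝ} (hx : 0 ≤ x) (m : ℕ) :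
    x ^ m / m.factorial ≤ Real.exp x := by
  refine le_trans ?_ (Real.sum_le_exp_of_nonneg hx (m+1))
  refine Finset.single_le_sum (f := fun i => x ^ i / i.factorial) ?_ (Finset.self_mem_range_succ m)
  intro i _
  positivity

lemma term_bound {d : ℝ} (hd : 1 ≤ d) {n s k : ℕ} (hs : 1 ≤ s) (hn : 1 ≤ n)
    (hk : Real.exp 4 * d * s ≤ k) :
    (n.choose s : ℝ) * (s:ℝ)^(s-1) * (((n - s).choose k : ℕ) : ℝ) * (s:ℝ)^k * (d/n)^(s-1+k)
      ≤ n * Real.exp (-3 * s) := by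
  obtain ⟨t, rfl⟩ : ∃ t, s = t + 1 := ⟨s - 1, by omega⟩
  set s := t + 1
  have hd0 : (0:ℝ) < d := lt_of_lt_of_le one_pos hd
  have hs0 : (0:ℝ) < (s:ℝ) := by positivity
  have hs1 : (1:ℝ) ≤ (s:ℝ) := by exact_mod_cast hs
  have hn0 : (0:ℝ) < (n:ℝ) := by exact_mod_cast hn
  have hk0 : (0:ℝ) < (k:ℝ) := lt_of_lt_of_le (by positivity) hk
  have hk1 : 1 ≤ k := by exact_mod_cast Nat.one_le_iff_ne_zero.2 (by
    intro h; rw [h] at hk0; simp at hk0)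
  have A : (n.choose s : ℝ) ≤ (n:ℝ)^s / s.factorial := by
    have := Nat.choose_le_pow_div (α := ℝ) s n
    simpa using this
  have B : (((n - s).choose k : ℕ) : ℝ) ≤ (n:ℝ)^k / k.factorial := by
    refine le_trans ?_ (by simpa using Nat.choose_le_pow_div (α := ℝ) k n)
    exact_mod_cast Nat.choose_le_choose k (Nat.sub_le n s)
  have hss : s - 1 = t := by omega
  rw [hss]
  have step1 : (n.choose s : ℝ) * (s:ℝ)^t * (((n - s).choose k : ℕ) : ℝ) * (s:ℝ)^k * (d/n)^(t+k)
      ≤ ((n:ℝ)^s / s.factorial) * (s:ℝ)^t * ((n:ℝ)^k / k.factorial) * (s:ℝ)^k * (d/n)^(t+k) := by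
    gcongr <;> positivity
  have step2 : ((n:ℝ)^s / s.factorial) * (s:ℝ)^t * ((n:ℝ)^k / k.factorial) * (s:ℝ)^k * (d/n)^(t+k)
      = (n:ℝ) * ((s:ℝ)^t * d^t / s.factorial) * (((s:ℝ)*d)^k / k.factorial) := by
    have hnne : (n:ℝ) ≠ 0 := ne_of_gt hn0
    rw [div_pow, pow_add, pow_add]
    field_simp
    ring
  have f1 : (s:ℝ)^t * d^t / s.factorial ≤ Real.exp s * d^t := by
    have h1 : (s:ℝ)^t ≤ (s:ℝ)^s := pow_le_pow_right₀ hs1 (by omega)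
    have h2 : (s:ℝ)^s / s.factorial ≤ Real.exp s := pow_div_factorial_le_exp hs0.le s
    have : (s:ℝ)^t / s.factorial ≤ Real.exp s := le_trans (by gcongr) h2
    calc (s:ℝ)^t * d^t / s.factorial = ((s:ℝ)^t / s.factorial) * d^t := by ring
      _ ≤ Real.exp s * d^t := mul_le_mul_of_nonneg_right this (by positivity)
  have f2 : ((s:ℝ)*d)^k / k.factorial ≤ Real.exp (-3) ^ k := by
    have hkk : (0:ℝ) < (k:ℝ)^k := by positivity
    have h2 : (k:ℝ)^k / k.factorial ≤ Real.exp k := pow_div_factorial_le_exp hk0.le k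
    have hfact : (0:ℝ) < (k.factorial : ℝ) := by exact_mod_cast k.factorial_pos
    have hinv : (1:ℝ) / k.factorial ≤ Real.exp k / (k:ℝ)^k := by
      rw [div_le_div_iff₀ hfact hkk, one_mul]
      exact (div_le_iff₀ hfact).1 h2
    have he : Real.exp (-3) * Real.exp 4 = Real.exp 1 := by
      rw [← Real.exp_add]; norm_num
    have base : (s:ℝ)*d*Real.exp 1 / (k:ℝ) ≤ Real.exp (-3) := by
      rw [div_le_iff₀ hk0]
      have h5 := mul_le_mul_of_nonneg_left hk (Real.exp_pos (-3)).le
      calc (s:ℝ)*d*Real.exp 1 = Real.exp (-3) * (Real.exp 4 * d * s) := by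
            rw [show Real.exp (-3) * (Real.exp 4 * d * ↑s) = (Real.exp (-3) * Real.exp 4) * (d * ↑s) by ring, he]; ring
        _ ≤ Real.exp (-3) * (k:ℝ) := h5
    calc ((s:ℝ)*d)^k / k.factorial = ((s:ℝ)*d)^k * (1 / k.factorial) := by ring
      _ ≤ ((s:ℝ)*d)^k * (Real.exp k / (k:ℝ)^k) :=
          mul_le_mul_of_nonneg_left hinv (by positivity)
      _ = ((s:ℝ)*d*Real.exp 1 / k)^k := by
        have hexp : Real.exp (k:ℝ) = Real.exp 1 ^ k := by rw [← Real.exp_nat_mul, mul_one]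
        rw [hexp, div_pow, mul_pow, mul_pow]
        ring
      _ ≤ Real.exp (-3) ^ k := by
        apply pow_le_pow_left₀ (by positivity) base
  have comb : (n:ℝ) * (Real.exp s * d^t) * (Real.exp (-3) ^ k) ≤ (n:ℝ) * Real.exp (-3*s) := by
    have hdt : d^t ≤ Real.exp ((s:ℝ) * Real.log d) := by
      have h1 : d^t ≤ d^s := pow_le_pow_right₀ hd (by omega)
      have h2 : Real.exp ((s:ℝ) * Real.log d) = d ^ s := by
        rw [Real.exp_nat_mul, Real.exp_log hd0]
      rw [h2]; exact h1
    have hek : Real.exp (-3) ^ k = Real.exp (-3 * k) := by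
      rw [← Real.exp_nat_mul]; congr 1; ring
    have hkc : Real.exp (-3 * (k:ℝ)) ≤ Real.exp (-3 * (Real.exp 4 * d * s)) := by
      apply Real.exp_le_exp.2; nlinarith
    have hlog : Real.log d ≤ d - 1 := Real.log_le_sub_one_of_pos hd0
    have hexp4 : (5:ℝ) ≤ Real.exp 4 := by
      have := Real.add_one_le_exp (4:ℝ); linarith
    have final : Real.exp (s:ℝ) * Real.exp ((s:ℝ) * Real.log d) * Real.exp (-3 * (Real.exp 4 * d * s))
        ≤ Real.exp (-3*s) := by
      rw [← Real.exp_add, ← Real.exp_add]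
      apply Real.exp_le_exp.2
      have h1 : (1:ℝ) ≤ s := hs1
      nlinarith [mul_le_mul_of_nonneg_left hlog hs0.le,
        mul_le_mul_of_nonneg_right hexp4 (mul_nonneg hd0.le hs0.le)]
    calc (n:ℝ) * (Real.exp s * d^t) * (Real.exp (-3) ^ k)
        ≤ (n:ℝ) * (Real.exp s * Real.exp ((s:ℝ) * Real.log d)) * Real.exp (-3 * (Real.exp 4 * d * s)) := by
          rw [hek]; gcongr <;> positivity
      _ = (n:ℝ) * (Real.exp (s:ℝ) * Real.exp ((s:ℝ) * Real.log d) * Real.exp (-3 * (Real.exp 4 * d * s))) := by ring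
      _ ≤ (n:ℝ) * Real.exp (-3*s) := by gcongr
  calc (n.choose s : ℝ) * (s:ℝ)^t * (((n - s).choose k : ℕ) : ℝ) * (s:ℝ)^k * (d/n)^(t+k)
      ≤ (n:ℝ) * ((s:ℝ)^t * d^t / s.factorial) * (((s:ℝ)*d)^k / k.factorial) := by
        rw [← step2]; exact step1
    _ ≤ (n:ℝ) * (Real.exp s * d^t) * (Real.exp (-3) ^ k) := by gcongr <;> positivity
    _ ≤ (n:ℝ) * Real.exp (-3*s) := comb

end Aux

namespace Stmt19

variable {n : ℕ}

open scoped Classical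

noncomputable def rS (r₀ : Fin n) (S : Finset (Fin n)) : Fin n :=
  if h : S.Nonempty then S.min' h else r₀

noncomputable def Edg (r₀ : Fin n) (S : Finset (Fin n)) (f : Fin n → Fin n)
    (W : Finset (Fin n)) (g : Fin n → Fin n) : Finset {e : Sym2 (Fin n) // ¬ e.IsDiag} :=
  (((S.erase (rS r₀ S)).image fun v => s(v, f v)) ∪ (W.image fun w => s(w, g w))).subtype _

def Cyl (E : Finset {e : Sym2 (Fin n) // ¬ e.IsDiag}) :
    Set ({e : Sym2 (Fin n) // ¬ e.IsDiag} → Bool) :=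
  {ω | ∀ i ∈ E, ω i = true}

noncomputable def Ffin (r₀ : Fin n) (S : Finset (Fin n)) : Finset (Fin n → Fin n) :=
  (Fintype.piFinset fun v => if v ∈ S.erase (rS r₀ S) then S else {rS r₀ S}).filter
    (fun f => Set.InjOn (fun v => s(v, f v)) ↑(S.erase (rS r₀ S)) ∧
      ∀ v ∈ S.erase (rS r₀ S), f v ≠ v ∧ f v ∈ S)

noncomputable def Gfin (r₀ : Fin n) (S W : Finset (Fin n)) : Finset (Fin n → Fin n) :=
  Fintype.piFinset fun v => if v ∈ W then S else {rS r₀ S}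

lemma card_Ffin (r₀ : Fin n) (S : Finset (Fin n)) :
    (Ffin r₀ S).card ≤ S.card ^ (S.erase (rS r₀ S)).card := by
  refine le_trans (Finset.card_filter_le _ _) (le_of_eq ?_)
  rw [Fintype.card_piFinset]
  calc ∏ v : Fin n, (if v ∈ S.erase (rS r₀ S) then S else {rS r₀ S}).card
      = ∏ v : Fin n, (if v ∈ S.erase (rS r₀ S) then S.card else 1) := by
        apply Finset.prod_congr rfl; intro v _
        by_cases hv : v ∈ S.erase (rS r₀ S) <;> simp [hv]
    _ = S.card ^ (S.erase (rS r₀ S)).card := by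
        rw [Finset.prod_ite_mem, Finset.univ_inter, Finset.prod_const]

lemma card_Gfin (r₀ : Fin n) (S W : Finset (Fin n)) :
    (Gfin r₀ S W).card = S.card ^ W.card := by
  rw [Gfin, Fintype.card_piFinset]
  calc ∏ v : Fin n, (if v ∈ W then S else {rS r₀ S}).card
      = ∏ v : Fin n, (if v ∈ W then S.card else 1) := by
        apply Finset.prod_congr rfl; intro v _
        by_cases hv : v ∈ W <;> simp [hv]
    _ = S.card ^ W.card := by
        rw [Finset.prod_ite_mem, Finset.univ_inter, Finset.prod_const]

lemma card_Edg (r₀ : Fin n) (S : Finset (Fin n)) (f : Fin n → Fin n)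
    (W : Finset (Fin n)) (g : Fin n → Fin n)
    (hf : f ∈ Ffin r₀ S) (hWS : ∀ w ∈ W, w ∉ S) (hg : ∀ w ∈ W, g w ∈ S) :
    (Edg r₀ S f W g).card = (S.erase (rS r₀ S)).card + W.card := by
  obtain ⟨-, hinj, hfv⟩ := Finset.mem_filter.1 hf
  set r := rS r₀ S
  have h1 : ((S.erase r).image fun v => s(v, f v)).card = (S.erase r).card :=
    Finset.card_image_of_injOn hinj
  have hginj : Set.InjOn (fun w => s(w, g w)) ↑W := by
    intro w₁ hw₁ w₂ hw₂ heq
    simp only [Sym2.eq, Sym2.rel_iff', Prod.mk.injEq, Prod.swap_prod_mk] at heq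
    rcases heq with ⟨h, -⟩ | ⟨ha, hb⟩
    · exact h
    · exact absurd (ha ▸ hg w₂ hw₂) (hWS w₁ hw₁)
  have h2 : (W.image fun w => s(w, g w)).card = W.card :=
    Finset.card_image_of_injOn hginj
  have hdisj : Disjoint ((S.erase r).image fun v => s(v, f v))
      (W.image fun w => s(w, g w)) := by
    rw [Finset.disjoint_left]
    rintro e he₁ he₂
    obtain ⟨v, hv, rfl⟩ := Finset.mem_image.1 he₁
    obtain ⟨w, hw, heq⟩ := Finset.mem_image.1 he₂
    simp only [Sym2.eq, Sym2.rel_iff', Prod.mk.injEq, Prod.swap_prod_mk] at heq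
    rcases heq with ⟨h1, -⟩ | ⟨h1, h2⟩
    · exact hWS w hw (h1 ▸ Finset.mem_of_mem_erase hv)
    · apply hWS w hw
      have h3 := (hfv v hv).2
      first | rwa [h2] at h3 | rwa [← h2] at h3 | rwa [h1] at h3 | rwa [← h1] at h3
  have hnd : ∀ e ∈ ((S.erase r).image fun v => s(v, f v)) ∪ (W.image fun w => s(w, g w)),
      ¬ e.IsDiag := by
    intro e he
    rcases Finset.mem_union.1 he with he | he
    · obtain ⟨v, hv, rfl⟩ := Finset.mem_image.1 he
      rw [Sym2.mk_isDiag_iff]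
      exact fun h => (hfv v hv).1 h.symm
    · obtain ⟨w, hw, rfl⟩ := Finset.mem_image.1 he
      rw [Sym2.mk_isDiag_iff]
      exact fun h => hWS w hw (h ▸ hg w hw)
  rw [Edg, Finset.card_subtype]
  rw [Finset.filter_true_of_mem hnd]
  rw [Finset.card_union_of_disjoint hdisj, h1, h2]

lemma cover {d : ℝ} (hd : 1 ≤ d) {n : ℕ} (r₀ : Fin n)
    (ω : {e : Sym2 (Fin n) // ¬ e.IsDiag} → Bool)
    (hω : ∃ S : Finset (Fin n),
        ((SimpleGraph.fromEdgeSet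
            {e : Sym2 (Fin n) | ∃ hd : ¬ e.IsDiag, ω ⟨e, hd⟩ = true}).induce
          (S : Set (Fin n))).Connected ∧
        1 * Real.log n ≤ S.card ∧
        (1 + Real.exp 4 * d - 1) * S.card <
          ((Finset.univ.filter fun v : Fin n => v ∉ S ∧ ∃ u ∈ S,
            (SimpleGraph.fromEdgeSet
              {e : Sym2 (Fin n) | ∃ hd : ¬ e.IsDiag, ω ⟨e, hd⟩ = true}).Adj u v).card : ℝ)) :
    ω ∈ ⋃ s ∈ Finset.Icc (max 1 ⌈Real.log n⌉₊) n,
        ⋃ S ∈ Finset.powersetCard s (Finset.univ : Finset (Fin n)),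
        ⋃ f ∈ Ffin r₀ S,
        ⋃ W ∈ Finset.powersetCard (⌊Real.exp 4 * d * s⌋₊ + 1) (Finset.univ \ S),
        ⋃ g ∈ Gfin r₀ S W, Cyl (Edg r₀ S f W g) := by
  obtain ⟨S, hconn, hlog, hcount⟩ := hω
  set G := SimpleGraph.fromEdgeSet
      {e : Sym2 (Fin n) | ∃ hd : ¬ e.IsDiag, ω ⟨e, hd⟩ = true} with hG
  have hSne : S.Nonempty := by
    obtain ⟨⟨v, hv⟩⟩ := hconn.nonempty
    exact ⟨v, hv⟩
  have hs1 : 1 ≤ S.card := Finset.card_pos.2 hSne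
  have hsn : S.card ≤ n := by simpa using Finset.card_le_univ S
  have hslog : ⌈Real.log n⌉₊ ≤ S.card := Nat.ceil_le.2 (by linarith [hlog])
  set r := rS r₀ S with hrdef
  have hrS : r ∈ S := by rw [hrdef, rS, dif_pos hSne]; exact S.min'_mem hSne
  obtain ⟨f₀, hf₀1, hf₀2, hf₀3⟩ := exists_parent_s19 G S r hrS hconn
  have hf₀mem : f₀ ∈ Ffin r₀ S := by
    rw [Ffin, Finset.mem_filter]
    refine ⟨Fintype.mem_piFinset.2 fun v => ?_, hf₀3,
      fun v hv => ⟨((hf₀1 v hv).2).ne', (hf₀1 v hv).1⟩⟩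
    by_cases hv : v ∈ S.erase (rS r₀ S)
    · simp only [hv, if_pos]
      exact (hf₀1 v hv).1
    · simp only [hv, if_neg, Finset.mem_singleton, not_false_iff]
      exact hf₀2 v hv
  set X := Finset.univ.filter (fun v : Fin n => v ∉ S ∧ ∃ u ∈ S, G.Adj u v) with hX
  set k := ⌊Real.exp 4 * d * S.card⌋₊ + 1 with hk
  have hkX : k ≤ X.card := by
    have h0 : (0:ℝ) ≤ Real.exp 4 * d * S.card := by positivity
    have hlt : Real.exp 4 * d * S.card < (X.card : ℝ) := by
      have he : (1 + Real.exp 4 * d - 1) = Real.exp 4 * d := by ring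
      rw [he] at hcount
      exact hcount
    have := (Nat.floor_lt h0).2 hlt
    omega
  obtain ⟨W, hWX, hWcard⟩ := Finset.exists_subset_card_eq hkX
  have hWS : ∀ w ∈ W, w ∉ S := fun w hw => ((Finset.mem_filter.1 (hWX hw)).2).1
  have hWadj : ∀ w ∈ W, ∃ u ∈ S, G.Adj u w := fun w hw => ((Finset.mem_filter.1 (hWX hw)).2).2
  have hWadj' : ∀ w ∈ W, ∃ u, u ∈ S ∧ G.Adj u w := by
    intro w hw; obtain ⟨u, hu1, hu2⟩ := hWadj w hw; exact ⟨u, hu1, hu2⟩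
  set g : Fin n → Fin n := fun w => if hw : w ∈ W then (hWadj' w hw).choose else r with hgdef
  have hgS : ∀ w (hw : w ∈ W), g w ∈ S ∧ G.Adj (g w) w := by
    intro w hw
    have hspec := (hWadj' w hw).choose_spec
    rw [hgdef]; simp only [dif_pos hw]
    exact hspec
  have hgmem : g ∈ Gfin r₀ S W := by
    simp only [Gfin, Fintype.mem_piFinset]
    intro v
    by_cases hv : v ∈ W
    · simp only [hv, if_pos]
      exact (hgS v hv).1
    · simp only [hv, if_neg, Finset.mem_singleton, not_false_iff]
      rw [hgdef]; simp [hv, hrdef]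
  have hCyl : ω ∈ Cyl (Edg r₀ S f₀ W g) := by
    intro i hi
    have hi' := Finset.mem_subtype.1 hi
    rcases Finset.mem_union.1 hi' with hmem | hmem
    · obtain ⟨v, hv, hveq⟩ := Finset.mem_image.1 hmem
      have hadj := (hf₀1 v hv).2
      rw [hG, SimpleGraph.fromEdgeSet_adj] at hadj
      obtain ⟨hd', hωe⟩ := hadj.1
      have : i = ⟨s(v, f₀ v), hd'⟩ := Subtype.ext hveq.symm
      rw [this]; exact hωe
    · obtain ⟨w, hw, hweq⟩ := Finset.mem_image.1 hmem
      have hadj := (hgS w hw).2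
      rw [hG, SimpleGraph.fromEdgeSet_adj] at hadj
      obtain ⟨hd', hωe⟩ := hadj.1
      have heq2 : (i : Sym2 (Fin n)) = s(g w, w) := by rw [← hweq, Sym2.eq_swap]
      have : i = ⟨s(g w, w), hd'⟩ := Subtype.ext heq2
      rw [this]; exact hωe
  refine Set.mem_iUnion₂.2 ⟨S.card, Finset.mem_Icc.2 ⟨max_le hs1 hslog, hsn⟩,
    Set.mem_iUnion₂.2 ⟨S, Finset.mem_powersetCard.2 ⟨Finset.subset_univ S, rfl⟩,
    Set.mem_iUnion₂.2 ⟨f₀, hf₀mem,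
    Set.mem_iUnion₂.2 ⟨W, Finset.mem_powersetCard.2
      ⟨fun w hw => Finset.mem_sdiff.2 ⟨Finset.mem_univ w, hWS w hw⟩, hWcard⟩,
    Set.mem_iUnion₂.2 ⟨g, hgmem, hCyl⟩⟩⟩⟩⟩

lemma edg_card_eq {d : ℝ} (r₀ : Fin n) {s : ℕ} (hs : 1 ≤ s) (S : Finset (Fin n))
    (hS : S.card = s) (f : Fin n → Fin n) (hf : f ∈ Ffin r₀ S)
    (W : Finset (Fin n)) (hW : W ∈ Finset.powersetCard (⌊Real.exp 4 * d * s⌋₊ + 1) (Finset.univ \ S))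
    (g : Fin n → Fin n) (hg : g ∈ Gfin r₀ S W) :
    (Edg r₀ S f W g).card = (s - 1) + (⌊Real.exp 4 * d * s⌋₊ + 1) := by
  obtain ⟨hWsub, hWcard⟩ := Finset.mem_powersetCard.1 hW
  have hSne : S.Nonempty := Finset.card_pos.1 (by omega)
  have hrS : rS r₀ S ∈ S := by rw [rS, dif_pos hSne]; exact S.min'_mem hSne
  have hWS : ∀ w ∈ W, w ∉ S := fun w hw => (Finset.mem_sdiff.1 (hWsub hw)).2
  have hgS : ∀ w ∈ W, g w ∈ S := by
    intro w hw
    have := Fintype.mem_piFinset.1 hg w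
    rwa [if_pos hw] at this
  rw [card_Edg r₀ S f W g hf hWS hgS, Finset.card_erase_of_mem hrS, hS, hWcard]

lemma main_bound {d : ℝ} (hd : 1 ≤ d) {n : ℕ} (hn : 1 ≤ n) :
    (Measure.pi (fun _ : {e : Sym2 (Fin n) // ¬ e.IsDiag} =>
        (PMF.bernoulli (min (Real.toNNReal (d / n)) 1)
          (min_le_right _ _)).toMeasure))
      {ω : {e : Sym2 (Fin n) // ¬ e.IsDiag} → Bool |
        ∃ S : Finset (Fin n),
          ((SimpleGraph.fromEdgeSet
              {e : Sym2 (Fin n) | ∃ hd : ¬ e.IsDiag, ω ⟨e, hd⟩ = true}).induce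
            (S : Set (Fin n))).Connected ∧
          1 * Real.log n ≤ S.card ∧
          (1 + Real.exp 4 * d - 1) * S.card <
            ((Finset.univ.filter fun v : Fin n => v ∉ S ∧ ∃ u ∈ S,
              (SimpleGraph.fromEdgeSet
                {e : Sym2 (Fin n) | ∃ hd : ¬ e.IsDiag, ω ⟨e, hd⟩ = true}).Adj u v).card : ℝ)}
      ≤ ENNReal.ofReal ((n:ℝ)⁻¹) := by
  have hn0 : (0:ℝ) < n := by exact_mod_cast hn
  have hd0 : (0:ℝ) < d := lt_of_lt_of_le one_pos hd
  have hdn : (0:ℝ) ≤ d / n := by positivity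
  set q : NNReal := min (Real.toNNReal (d / n)) 1 with hq
  set μ := Measure.pi (fun _ : {e : Sym2 (Fin n) // ¬ e.IsDiag} =>
        (PMF.bernoulli q (min_le_right _ _)).toMeasure) with hμ
  set r₀ : Fin n := ⟨0, hn⟩ with hr₀
  set s₀ := max 1 ⌈Real.log n⌉₊ with hs₀
  set kk : ℕ → ℕ := fun s => ⌊Real.exp 4 * d * s⌋₊ + 1 with hkk
  -- per-code measure bound
  have hterm : ∀ s ∈ Finset.Icc s₀ n, ∀ S ∈ Finset.powersetCard s (Finset.univ : Finset (Fin n)),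
      ∀ f ∈ Ffin r₀ S, ∀ W ∈ Finset.powersetCard (kk s) (Finset.univ \ S), ∀ g ∈ Gfin r₀ S W,
      μ (Cyl (Edg r₀ S f W g)) ≤ ENNReal.ofReal ((d/n) ^ ((s-1) + kk s)) := by
    intro s hsmem S hSmem f hf W hW g hg
    have hs1 : 1 ≤ s := le_trans (le_max_left _ _) (Finset.mem_Icc.1 hsmem).1
    have hScard : S.card = s := (Finset.mem_powersetCard.1 hSmem).2
    have hmc := measure_cyl q (min_le_right _ _) (Edg r₀ S f W g)
    rw [hμ]
    rw [show {ω : {e : Sym2 (Fin n) // ¬ e.IsDiag} → Bool | ∀ i ∈ Edg r₀ S f W g, ω i = true}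
        = Cyl (Edg r₀ S f W g) from rfl] at hmc
    rw [hmc, edg_card_eq (d := d) r₀ hs1 S hScard f hf W hW g hg]
    calc (q : ℝ≥0∞) ^ ((s-1) + kk s) ≤ (ENNReal.ofReal (d/n)) ^ ((s-1) + kk s) := by
          gcongr
          exact ENNReal.coe_le_coe.2 (min_le_left _ _)
      _ = ENNReal.ofReal ((d/n) ^ ((s-1) + kk s)) := (ENNReal.ofReal_pow hdn _).symm
  -- sum bound per s
  have hsum : ∀ s ∈ Finset.Icc s₀ n,
      ∑ S ∈ Finset.powersetCard s (Finset.univ : Finset (Fin n)),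
        ∑ f ∈ Ffin r₀ S, ∑ W ∈ Finset.powersetCard (kk s) (Finset.univ \ S),
          ∑ g ∈ Gfin r₀ S W, μ (Cyl (Edg r₀ S f W g))
      ≤ ENNReal.ofReal ((n:ℝ) * Real.exp (-3 * s)) := by
    intro s hsmem
    have hs1 : 1 ≤ s := le_trans (le_max_left _ _) (Finset.mem_Icc.1 hsmem).1
    set P := ENNReal.ofReal ((d/n) ^ ((s-1) + kk s)) with hP
    have step : ∑ S ∈ Finset.powersetCard s (Finset.univ : Finset (Fin n)),
        ∑ f ∈ Ffin r₀ S, ∑ W ∈ Finset.powersetCard (kk s) (Finset.univ \ S),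
          ∑ g ∈ Gfin r₀ S W, μ (Cyl (Edg r₀ S f W g))
        ≤ (n.choose s : ℝ≥0∞) * (s:ℝ≥0∞) ^ (s-1) * ((n - s).choose (kk s) : ℝ≥0∞)
            * (s:ℝ≥0∞) ^ (kk s) * P := by
      have inner : ∀ S ∈ Finset.powersetCard s (Finset.univ : Finset (Fin n)),
          ∑ f ∈ Ffin r₀ S, ∑ W ∈ Finset.powersetCard (kk s) (Finset.univ \ S),
            ∑ g ∈ Gfin r₀ S W, μ (Cyl (Edg r₀ S f W g))
          ≤ (s:ℝ≥0∞) ^ (s-1) * (((n - s).choose (kk s) : ℝ≥0∞) * ((s:ℝ≥0∞) ^ (kk s) * P)) := by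
        intro S hSmem
        have hScard : S.card = s := (Finset.mem_powersetCard.1 hSmem).2
        have hSne : S.Nonempty := Finset.card_pos.1 (by omega)
        have hrS : rS r₀ S ∈ S := by rw [rS, dif_pos hSne]; exact S.min'_mem hSne
        have herase : (S.erase (rS r₀ S)).card = s - 1 := by
          rw [Finset.card_erase_of_mem hrS, hScard]
        have hF : ((Ffin r₀ S).card : ℝ≥0∞) ≤ (s:ℝ≥0∞) ^ (s-1) := by
          have := card_Ffin r₀ S
          rw [herase, hScard] at this
          exact_mod_cast Nat.cast_le.2 this
        have hWcardset : (Finset.powersetCard (kk s) (Finset.univ \ S)).card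
            = (n - s).choose (kk s) := by
          rw [Finset.card_powersetCard, Finset.card_sdiff_of_subset (Finset.subset_univ S),
            Finset.card_univ, Fintype.card_fin, hScard]
        refine le_trans (Finset.sum_le_sum fun f hf => ?_)
          (le_trans (Finset.sum_le_card_nsmul _ _ _ (fun f _ => le_refl
            (((n - s).choose (kk s) : ℝ≥0∞) * ((s:ℝ≥0∞) ^ (kk s) * P)))) ?_)
        · -- inner over W, g for fixed f
          refine le_trans (Finset.sum_le_sum fun W hW => ?_)
            (le_trans (Finset.sum_le_card_nsmul _ _ _ (fun W _ => le_refl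
              ((s:ℝ≥0∞) ^ (kk s) * P))) ?_)
          · -- sum over g
            have hGcard : ((Gfin r₀ S W).card : ℝ≥0∞) = (s:ℝ≥0∞) ^ (W.card) := by
              rw [card_Gfin, hScard]; push_cast; ring
            have hWcard : W.card = kk s := (Finset.mem_powersetCard.1 hW).2
            refine le_trans (Finset.sum_le_card_nsmul _ _ P
              (fun g hg => hterm s hsmem S hSmem f hf W hW g hg)) ?_
            rw [nsmul_eq_mul, hGcard, hWcard]
          · rw [nsmul_eq_mul, hWcardset]
        · rw [nsmul_eq_mul]
          exact mul_le_mul' hF (le_refl _)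
      refine le_trans (Finset.sum_le_card_nsmul _ _ _ inner) ?_
      rw [nsmul_eq_mul, Finset.card_powersetCard, Finset.card_univ, Fintype.card_fin]
      ring_nf
      exact le_refl _
    refine le_trans step ?_
    have hks : Real.exp 4 * d * s ≤ (kk s : ℝ) := by
      rw [hkk]
      push_cast
      exact (Nat.lt_floor_add_one _).le
    have := term_bound hd hs1 hn hks
    calc (n.choose s : ℝ≥0∞) * (s:ℝ≥0∞) ^ (s-1) * ((n - s).choose (kk s) : ℝ≥0∞)
          * (s:ℝ≥0∞) ^ (kk s) * P
        = ENNReal.ofReal ((n.choose s : ℝ) * (s:ℝ)^(s-1) * (((n - s).choose (kk s) : ℕ) : ℝ)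
            * (s:ℝ)^(kk s) * (d/n)^((s-1) + kk s)) := by
          rw [hP]
          rw [ENNReal.ofReal_mul (by positivity), ENNReal.ofReal_mul (by positivity),
            ENNReal.ofReal_mul (by positivity), ENNReal.ofReal_mul (by positivity)]
          simp [ENNReal.ofReal_pow, ENNReal.ofReal_natCast, Nat.cast_nonneg]
      _ ≤ ENNReal.ofReal ((n:ℝ) * Real.exp (-3 * s)) := ENNReal.ofReal_le_ofReal this
  -- assemble
  refine le_trans (measure_mono (fun ω hω => cover hd r₀ ω hω)) ?_
  refine le_trans (measure_biUnion_finset_le _ _) ?_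
  refine le_trans (Finset.sum_le_sum (fun s hs => le_trans
    (measure_biUnion_finset_le _ _) (le_trans (Finset.sum_le_sum (fun S hS => le_trans
      (measure_biUnion_finset_le _ _) (Finset.sum_le_sum (fun f hf => le_trans
        (measure_biUnion_finset_le _ _) (Finset.sum_le_sum (fun W hW =>
          (measure_biUnion_finset_le _ _))))))) (hsum s hs)))) ?_
  -- now: ∑ s ∈ Icc s₀ n, ofReal (n * exp (-3 s)) ≤ ofReal (n⁻¹)
  have hmono : ∀ s ∈ Finset.Icc s₀ n,
      ENNReal.ofReal ((n:ℝ) * Real.exp (-3 * s)) ≤ ENNReal.ofReal ((n:ℝ) * Real.exp (-3 * s₀)) := by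
    intro s hsmem
    apply ENNReal.ofReal_le_ofReal
    have hss : (s₀:ℝ) ≤ s := by exact_mod_cast (Finset.mem_Icc.1 hsmem).1
    have : Real.exp (-3 * s) ≤ Real.exp (-3 * s₀) := Real.exp_le_exp.2 (by linarith)
    nlinarith
  refine le_trans (Finset.sum_le_card_nsmul _ _ _ hmono) ?_
  have hcard : (Finset.Icc s₀ n).card ≤ n := by
    rw [Nat.card_Icc]
    have : 1 ≤ s₀ := le_max_left _ _
    omega
  calc (Finset.Icc s₀ n).card • ENNReal.ofReal ((n:ℝ) * Real.exp (-3 * s₀))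
      ≤ n • ENNReal.ofReal ((n:ℝ) * Real.exp (-3 * s₀)) := by
        rw [nsmul_eq_mul, nsmul_eq_mul]
        exact mul_le_mul' (Nat.cast_le.2 hcard) (le_refl _)
    _ = ENNReal.ofReal ((n:ℝ) * ((n:ℝ) * Real.exp (-3 * s₀))) := by
        rw [nsmul_eq_mul, ← ENNReal.ofReal_natCast n, ← ENNReal.ofReal_mul (by positivity)]
    _ ≤ ENNReal.ofReal ((n:ℝ)⁻¹) := by
        apply ENNReal.ofReal_le_ofReal
        have hlogs : Real.log n ≤ (s₀:ℝ) := by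
          have h1 : Real.log n ≤ (⌈Real.log n⌉₊ : ℝ) := Nat.le_ceil _
          have h2 : (⌈Real.log n⌉₊ : ℝ) ≤ (s₀ : ℝ) := by
            exact_mod_cast le_max_right 1 ⌈Real.log n⌉₊
          linarith
        have hexp : Real.exp (-3 * s₀) ≤ ((n:ℝ)⁻¹)^3 := by
          have h1 : Real.exp (-3 * s₀) ≤ Real.exp (-3 * Real.log n) :=
            Real.exp_le_exp.2 (by linarith)
          have h2 : Real.exp (-3 * Real.log n) = ((n:ℝ)⁻¹)^3 := by
            rw [show (-3:ℝ) * Real.log n = (3:ℕ) * (- Real.log n) by push_cast; ring,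
              Real.exp_nat_mul, Real.exp_neg, Real.exp_log hn0]
          linarith [h2 ▸ h1]
        calc (n:ℝ) * ((n:ℝ) * Real.exp (-3 * s₀)) ≤ (n:ℝ) * ((n:ℝ) * ((n:ℝ)⁻¹)^3) := by
              gcongr
          _ = (n:ℝ)⁻¹ := by field_simp

end Stmt19



open MeasureTheory Filter in
open scoped Classical in
/-- First moment bound for expansion in `G(n, d/n)`: for every `d ≥ 1` there
exist `h < ∞` and `a > 0` such that with probability `1 − o(1)` every connected
subset `S` of the Erdős–Rényi random graph `G(n, d/n)` with `|S| ≥ a log n` has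
at most `(h−1)|S|` vertices at distance exactly 1 from `S` (i.e. external
neighbors).  The random graph is modelled by independent Bernoulli(`d/n`)
indicators, one for each potential edge. -/
theorem stmt_19 : ∀ d : ℝ, 1 ≤ d → ∃ h a : ℝ, 0 < h ∧ 0 < a ∧
    Tendsto (fun n : ℕ =>
      (Measure.pi (fun _ : {e : Sym2 (Fin n) // ¬ e.IsDiag} =>
          (PMF.bernoulli (min (Real.toNNReal (d / n)) 1)
            (min_le_right _ _)).toMeasure))
        {ω : {e : Sym2 (Fin n) // ¬ e.IsDiag} → Bool |
          ∃ S : Finset (Fin n),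
            ((SimpleGraph.fromEdgeSet
                {e : Sym2 (Fin n) | ∃ hd : ¬ e.IsDiag, ω ⟨e, hd⟩ = true}).induce
              (S : Set (Fin n))).Connected ∧
            a * Real.log n ≤ S.card ∧
            (h - 1) * S.card <
              ((Finset.univ.filter fun v : Fin n => v ∉ S ∧ ∃ u ∈ S,
                (SimpleGraph.fromEdgeSet
                  {e : Sym2 (Fin n) | ∃ hd : ¬ e.IsDiag, ω ⟨e, hd⟩ = true}).Adj u v).card : ℝ)})
      atTop (nhds 0) := by
  intro d hd
  have hd0 : (0:ℝ) < d := lt_of_lt_of_le one_pos hd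
  refine ⟨1 + Real.exp 4 * d, 1, by positivity, one_pos, ?_⟩
  have h0 : Tendsto (fun n : ℕ => ENNReal.ofReal ((n:ℝ)⁻¹)) atTop (nhds 0) := by
    have := ENNReal.tendsto_ofReal (tendsto_inv_atTop_nhds_zero_nat)
    simpa using this
  apply tendsto_of_tendsto_of_tendsto_of_le_of_le' tendsto_const_nhds h0
    (Eventually.of_forall fun n => zero_le)
  filter_upwards [eventually_ge_atTop 1] with n hn
  exact Stmt19.main_bound hd hn
end
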